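/- Define γ₂*(G) for G ∈ ℝ^{(X×A)×(Y×B)} as the infimum over all decompositions G((x,a),(y,b)) = ∑_{i,j} μ_{ij}·G_A^i(x,a)·G_B^j(y,b) (finite families) of ‖(μ_{ij})‖_{2→2} · (∑_i ‖G_A^i‖²_{1(∞)})^{1/2} · (∑_j ‖G_B^j‖²_{1(∞)})^{1/2}. Then γ₂* is submultiplicative under parallel composition: for games G₁ on (X₁×A₁)×(Y₁×B₁) and G₂ on (X₂×A₂)×(Y₂×B₂), γ₂*(G₁ ⊙ G₂) ≤ γ₂*(G₁)·γ₂*(G₂), where (G₁ ⊙ G₂)(((x₁,x₂),(a₁,a₂)),((y₁,y₂),(b₁,b₂))) = G₁((x₁,a₁),(y₁,b₁))·G₂((x₂,a₂),(y₂,b₂)) viewed as bipartite with respect to the partition (X₁×A₁×X₂×A₂) : (Y₁×B₁×Y₂×B₂). -/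

import Mathlib

open Finset

/-- The `1(∞)`-norm of `G ∈ ℝ^{X×A}`: `∑_x max_a |G (x,a)|`. -/
noncomputable def normOneInf {X A : Type*} [Fintype X] [Fintype A] [Nonempty A]
    (G : X × A → ℝ) : ℝ :=
  ∑ x : X, Finset.univ.sup' Finset.univ_nonempty (fun a : A => |G (x, a)|)

/-- The `ℓ₂ → ℓ₂` operator norm of a real matrix. -/
noncomputable def opNorm2 {ι κ : Type*} [Fintype ι] [Fintype κ] [DecidableEq κ]
    (M : Matrix ι κ ℝ) : ℝ :=
  sSup {r : ℝ | ∃ v : EuclideanSpace ℝ κ, ‖v‖ ≤ 1 ∧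
    r = ‖(Matrix.toEuclideanLin M) v‖}

/-- `γ₂*(G)`: the infimum over decompositions
`G = ∑_{i,j} μ_{ij} G_A^i ⊗ G_B^j` of
`‖μ‖_{2→2} · ℓ₂(G_A^i; 1(∞)) · ℓ₂(G_B^j; 1(∞))`. -/
noncomputable def gamma2star {X A Y B : Type*}
    [Fintype X] [Fintype A] [Fintype Y] [Fintype B] [Nonempty A] [Nonempty B]
    (G : (X × A) × (Y × B) → ℝ) : ℝ :=
  sInf {r : ℝ | ∃ (n : ℕ) (μ : Matrix (Fin n) (Fin n) ℝ)
    (GA : Fin n → X × A → ℝ) (GB : Fin n → Y × B → ℝ),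
    (∀ (x : X) (a : A) (y : Y) (b : B),
      G ((x, a), (y, b)) = ∑ i : Fin n, ∑ j : Fin n, μ i j * GA i (x, a) * GB j (y, b)) ∧
    r = opNorm2 μ * Real.sqrt (∑ i : Fin n, (normOneInf (GA i)) ^ 2) *
        Real.sqrt (∑ j : Fin n, (normOneInf (GB j)) ^ 2)}

section Aux

variable {ι κ : Type*} [Fintype ι] [Fintype κ] [DecidableEq κ]

noncomputable def clmOf (M : Matrix ι κ ℝ) : EuclideanSpace ℝ κ →L[ℝ] EuclideanSpace ℝ ι :=
  LinearMap.toContinuousLinearMap (Matrix.toEuclideanLin M)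

set_option maxHeartbeats 1000000 in
lemma opNorm2_eq (M : Matrix ι κ ℝ) : opNorm2 M = ‖clmOf M‖ := by
  rw [← (clmOf M).sSup_unitClosedBall_eq_norm]
  refine congrArg sSup (Set.ext fun r => ?_)
  simp only [Set.mem_setOf_eq, Set.mem_image]
  constructor
  · rintro ⟨v, hv, rfl⟩
    exact ⟨v, mem_closedBall_zero_iff.2 hv, rfl⟩
  · rintro ⟨v, hv, rfl⟩
    exact ⟨v, mem_closedBall_zero_iff.1 hv, rfl⟩

lemma opNorm2_nonneg (M : Matrix ι κ ℝ) : 0 ≤ opNorm2 M := by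
  rw [opNorm2_eq]; exact norm_nonneg _

lemma sum_sq_mulVec_le (M : Matrix ι κ ℝ) (x : κ → ℝ) :
    ∑ i : ι, (∑ k : κ, M i k * x k) ^ 2 ≤ opNorm2 M ^ 2 * ∑ k : κ, x k ^ 2 := by
  set y : EuclideanSpace ℝ κ := (WithLp.equiv 2 (κ → ℝ)).symm x with hy
  have h := (clmOf M).le_opNorm y
  have hsq : ‖clmOf M y‖ ^ 2 ≤ (‖clmOf M‖ * ‖y‖) ^ 2 :=
    pow_le_pow_left₀ (norm_nonneg _) h 2
  have h1 : ‖clmOf M y‖ ^ 2 = ∑ i : ι, (∑ k : κ, M i k * x k) ^ 2 := by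
    rw [EuclideanSpace.norm_eq, Real.sq_sqrt (by positivity)]
    refine Finset.sum_congr rfl fun i _ => ?_
    have hcoord : (clmOf M y) i = ∑ k : κ, M i k * x k := by
      show (Matrix.toEuclideanLin M y) i = _
      rw [hy, WithLp.equiv_symm_apply, Matrix.toEuclideanLin_apply_piLp_toLp]
      simp [Matrix.mulVec, dotProduct]
    rw [Real.norm_eq_abs, sq_abs, hcoord]
  have h2 : ‖y‖ ^ 2 = ∑ k : κ, x k ^ 2 := by
    rw [EuclideanSpace.norm_eq, Real.sq_sqrt (by positivity)]
    refine Finset.sum_congr rfl fun k _ => ?_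
    rw [Real.norm_eq_abs, sq_abs]
    rfl
  calc ∑ i : ι, (∑ k : κ, M i k * x k) ^ 2 = ‖clmOf M y‖ ^ 2 := h1.symm
    _ ≤ (‖clmOf M‖ * ‖y‖) ^ 2 := hsq
    _ = ‖clmOf M‖ ^ 2 * ‖y‖ ^ 2 := by ring
    _ = opNorm2 M ^ 2 * ∑ k : κ, x k ^ 2 := by rw [h2, ← opNorm2_eq]

end Aux

section NOI

lemma normOneInf_nonneg {X A : Type*} [Fintype X] [Fintype A] [Nonempty A]
    (G : X × A → ℝ) : 0 ≤ normOneInf G :=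
  Finset.sum_nonneg fun x _ =>
    le_trans (abs_nonneg (G (x, Classical.arbitrary A)))
      (Finset.le_sup' (fun a : A => |G (x, a)|) (Finset.mem_univ _))

lemma normOneInf_tensor_le {X₁ A₁ X₂ A₂ : Type*}
    [Fintype X₁] [Fintype A₁] [Fintype X₂] [Fintype A₂]
    [Nonempty A₁] [Nonempty A₂] (f : X₁ × A₁ → ℝ) (g : X₂ × A₂ → ℝ) :
    normOneInf (fun p : (X₁ × X₂) × (A₁ × A₂) =>
        f (p.1.1, p.2.1) * g (p.1.2, p.2.2)) ≤ normOneInf f * normOneInf g := by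
  unfold normOneInf
  rw [Fintype.sum_prod_type, Finset.sum_mul_sum]
  refine Finset.sum_le_sum fun x₁ _ => Finset.sum_le_sum fun x₂ _ => ?_
  refine Finset.sup'_le _ _ fun a _ => ?_
  have h1 : |f (x₁, a.1)| ≤ Finset.univ.sup' Finset.univ_nonempty
      (fun a₁ : A₁ => |f (x₁, a₁)|) := Finset.le_sup' (fun a₁ : A₁ => |f (x₁, a₁)|) (Finset.mem_univ a.1)
  have h2 : |g (x₂, a.2)| ≤ Finset.univ.sup' Finset.univ_nonempty
      (fun a₂ : A₂ => |g (x₂, a₂)|) := Finset.le_sup' (fun a₂ : A₂ => |g (x₂, a₂)|) (Finset.mem_univ a.2)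
  calc |f (x₁, a.1) * g (x₂, a.2)| = |f (x₁, a.1)| * |g (x₂, a.2)| := abs_mul _ _
    _ ≤ _ := mul_le_mul h1 h2 (abs_nonneg _) (le_trans (abs_nonneg _) h1)

end NOI

section Kron

lemma opNorm2_kron_le {n₁ n₂ : ℕ}
    (μ₁ : Matrix (Fin n₁) (Fin n₁) ℝ) (μ₂ : Matrix (Fin n₂) (Fin n₂) ℝ) :
    opNorm2 (Matrix.of (fun i j : Fin (n₁ * n₂) =>
      μ₁ (finProdFinEquiv.symm i).1 (finProdFinEquiv.symm j).1 *
      μ₂ (finProdFinEquiv.symm i).2 (finProdFinEquiv.symm j).2)) ≤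
    opNorm2 μ₁ * opNorm2 μ₂ := by
  set M : Matrix (Fin (n₁ * n₂)) (Fin (n₁ * n₂)) ℝ := Matrix.of (fun i j =>
      μ₁ (finProdFinEquiv.symm i).1 (finProdFinEquiv.symm j).1 *
      μ₂ (finProdFinEquiv.symm i).2 (finProdFinEquiv.symm j).2) with hM
  set c₁ := opNorm2 μ₁
  set c₂ := opNorm2 μ₂
  have hc₁ : 0 ≤ c₁ := opNorm2_nonneg μ₁
  have hc₂ : 0 ≤ c₂ := opNorm2_nonneg μ₂
  refine Real.sSup_le ?_ (mul_nonneg hc₁ hc₂)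
  rintro r ⟨v, hv, rfl⟩
  set z : Fin n₁ × Fin n₂ → ℝ := fun p => v (finProdFinEquiv p) with hzdef
  set u : Fin n₁ × Fin n₂ → ℝ := fun il => ∑ k, μ₁ il.1 k * z (k, il.2) with hudef
  have hz2 : ∑ p : Fin n₁ × Fin n₂, z p ^ 2 = ∑ j : Fin (n₁ * n₂), v j ^ 2 :=
    Fintype.sum_equiv finProdFinEquiv _ _ (fun p => rfl)
  have hvsq : ∑ j : Fin (n₁ * n₂), v j ^ 2 ≤ 1 := by
    have : ‖v‖ ^ 2 ≤ 1 := by nlinarith [norm_nonneg v]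
    rw [EuclideanSpace.norm_eq, Real.sq_sqrt (by positivity)] at this
    simpa [Real.norm_eq_abs, sq_abs] using this
  have hcoord : ∀ i : Fin (n₁ * n₂), (Matrix.toEuclideanLin M v) i =
      ∑ l : Fin n₂, μ₂ (finProdFinEquiv.symm i).2 l * u ((finProdFinEquiv.symm i).1, l) := by
    intro i
    have h0 : (Matrix.toEuclideanLin M v) i = ∑ j : Fin (n₁ * n₂), M i j * v j := by
      show (Matrix.mulVec M ((WithLp.equiv 2 (Fin (n₁ * n₂) → ℝ)) v)) i = _
      simp only [Matrix.mulVec, dotProduct]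
      rfl
    rw [h0]
    rw [← Fintype.sum_equiv finProdFinEquiv
      (fun q : Fin n₁ × Fin n₂ => μ₁ (finProdFinEquiv.symm i).1 q.1 *
        μ₂ (finProdFinEquiv.symm i).2 q.2 * z q)
      (fun j => M i j * v j) (fun q => by rw [hM]; simp only [Matrix.of_apply, Equiv.symm_apply_apply]; rfl)]
    rw [Fintype.sum_prod_type, Finset.sum_comm]
    refine Finset.sum_congr rfl fun l _ => ?_
    rw [hudef]
    simp only
    rw [Finset.mul_sum]
    exact Finset.sum_congr rfl fun k _ => by ring
  have hu2 : ∑ il : Fin n₁ × Fin n₂, u il ^ 2 ≤ c₁ ^ 2 * ∑ p : Fin n₁ × Fin n₂, z p ^ 2 := by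
    rw [Fintype.sum_prod_type, Finset.sum_comm]
    calc ∑ l : Fin n₂, ∑ i : Fin n₁, u (i, l) ^ 2
        ≤ ∑ l : Fin n₂, c₁ ^ 2 * ∑ k : Fin n₁, z (k, l) ^ 2 := by
          refine Finset.sum_le_sum fun l _ => ?_
          exact sum_sq_mulVec_le μ₁ (fun k => z (k, l))
      _ = c₁ ^ 2 * ∑ p : Fin n₁ × Fin n₂, z p ^ 2 := by
          rw [← Finset.mul_sum, Fintype.sum_prod_type, Finset.sum_comm]
  have key : ∑ i : Fin (n₁ * n₂), ((Matrix.toEuclideanLin M v) i) ^ 2 ≤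
      (c₁ * c₂) ^ 2 * ∑ j : Fin (n₁ * n₂), v j ^ 2 := by
    have h1 : ∑ i : Fin (n₁ * n₂), ((Matrix.toEuclideanLin M v) i) ^ 2 =
        ∑ p : Fin n₁ × Fin n₂, (∑ l : Fin n₂, μ₂ p.2 l * u (p.1, l)) ^ 2 := by
      refine (Fintype.sum_equiv finProdFinEquiv _ _ (fun p => ?_)).symm
      rw [hcoord]
      simp
    rw [h1]
    simp only [Fintype.sum_prod_type]
    calc ∑ i : Fin n₁, ∑ j : Fin n₂, (∑ l : Fin n₂, μ₂ j l * u (i, l)) ^ 2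
        ≤ ∑ i : Fin n₁, c₂ ^ 2 * ∑ l : Fin n₂, u (i, l) ^ 2 := by
          refine Finset.sum_le_sum fun i _ => ?_
          exact sum_sq_mulVec_le μ₂ (fun l => u (i, l))
      _ = c₂ ^ 2 * ∑ il : Fin n₁ × Fin n₂, u il ^ 2 := by
          rw [← Finset.mul_sum, Fintype.sum_prod_type]
      _ ≤ c₂ ^ 2 * (c₁ ^ 2 * ∑ p : Fin n₁ × Fin n₂, z p ^ 2) := by
          exact mul_le_mul_of_nonneg_left hu2 (by positivity)
      _ = (c₁ * c₂) ^ 2 * ∑ p : Fin n₁ × Fin n₂, z p ^ 2 := by ring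
      _ = (c₁ * c₂) ^ 2 * ∑ j : Fin (n₁ * n₂), v j ^ 2 := by rw [hz2]
  have hnorm : ‖Matrix.toEuclideanLin M v‖ =
      Real.sqrt (∑ i : Fin (n₁ * n₂), ((Matrix.toEuclideanLin M v) i) ^ 2) := by
    rw [EuclideanSpace.norm_eq]
    congr 1
    exact Finset.sum_congr rfl fun i _ => by rw [Real.norm_eq_abs, sq_abs]
  rw [hnorm]
  calc Real.sqrt (∑ i : Fin (n₁ * n₂), ((Matrix.toEuclideanLin M v) i) ^ 2)
      ≤ Real.sqrt ((c₁ * c₂) ^ 2 * 1) := by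
        apply Real.sqrt_le_sqrt
        refine le_trans key ?_
        exact mul_le_mul_of_nonneg_left hvsq (by positivity)
    _ = c₁ * c₂ := by
        rw [mul_one, Real.sqrt_sq (mul_nonneg hc₁ hc₂)]

end Kron

section Rest

lemma le_sInf_mul {S T : Set ℝ} (hS : S.Nonempty) (hT : T.Nonempty)
    (hS0 : ∀ s ∈ S, 0 ≤ s) (hT0 : ∀ t ∈ T, 0 ≤ t) {P : ℝ}
    (h : ∀ s ∈ S, ∀ t ∈ T, P ≤ s * t) : P ≤ sInf S * sInf T := by
  have hT0' : 0 ≤ sInf T := Real.sInf_nonneg hT0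
  have step : ∀ s ∈ S, P ≤ s * sInf T := by
    intro s hs
    rcases (hS0 s hs).eq_or_lt with h0 | h0
    · obtain ⟨t, ht⟩ := hT
      have h1 := h s hs t ht
      rw [← h0] at h1 ⊢
      simpa using h1
    · have h1 : P / s ≤ sInf T := le_csInf hT fun t ht =>
        (div_le_iff₀ h0).2 (by rw [mul_comm]; exact h s hs t ht)
      calc P = P / s * s := by field_simp
        _ ≤ sInf T * s := mul_le_mul_of_nonneg_right h1 h0.le
        _ = s * sInf T := mul_comm _ _
  rcases hT0'.eq_or_lt with h0 | h0
  · obtain ⟨s, hs⟩ := hS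
    have h1 := step s hs
    rw [← h0] at h1 ⊢
    simpa using h1
  · have h1 : P / sInf T ≤ sInf S := le_csInf hS fun s hs =>
      (div_le_iff₀ h0).2 (step s hs)
    calc P = P / sInf T * sInf T := by field_simp
      _ ≤ sInf S * sInf T := mul_le_mul_of_nonneg_right h1 h0.le

def gset {X A Y B : Type*}
    [Fintype X] [Fintype A] [Fintype Y] [Fintype B] [Nonempty A] [Nonempty B]
    (G : (X × A) × (Y × B) → ℝ) : Set ℝ :=
  {r : ℝ | ∃ (n : ℕ) (μ : Matrix (Fin n) (Fin n) ℝ)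
    (GA : Fin n → X × A → ℝ) (GB : Fin n → Y × B → ℝ),
    (∀ (x : X) (a : A) (y : Y) (b : B),
      G ((x, a), (y, b)) = ∑ i : Fin n, ∑ j : Fin n, μ i j * GA i (x, a) * GB j (y, b)) ∧
    r = opNorm2 μ * Real.sqrt (∑ i : Fin n, (normOneInf (GA i)) ^ 2) *
        Real.sqrt (∑ j : Fin n, (normOneInf (GB j)) ^ 2)}

variable {X A Y B : Type*}
    [Fintype X] [Fintype A] [Fintype Y] [Fintype B] [Nonempty A] [Nonempty B]

lemma gset_nonneg (G : (X × A) × (Y × B) → ℝ) : ∀ r ∈ gset G, 0 ≤ r := by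
  rintro r ⟨n, μ, GA, GB, -, rfl⟩
  exact mul_nonneg (mul_nonneg (opNorm2_nonneg μ) (Real.sqrt_nonneg _)) (Real.sqrt_nonneg _)

lemma gset_nonempty (G : (X × A) × (Y × B) → ℝ) : (gset G).Nonempty := by
  classical
  set n := Fintype.card (Y × B) with hn
  set e : Fin n ≃ Y × B := (Fintype.equivFin (Y × B)).symm with he
  refine ⟨_, n, (1 : Matrix (Fin n) (Fin n) ℝ),
    (fun i p => G (p, e i)), (fun j q => if e j = q then 1 else 0), fun x a y b => ?_, rfl⟩
  have h1 : ∀ (i : Fin n),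
      ∑ j : Fin n, (1 : Matrix (Fin n) (Fin n) ℝ) i j * G ((x, a), e i) *
        (if e j = (y, b) then 1 else 0)
      = G ((x, a), e i) * (if e i = (y, b) then 1 else 0) := by
    intro i
    rw [Finset.sum_eq_single i]
    · simp [Matrix.one_apply]
    · intro j _ hj
      simp [Matrix.one_apply, Ne.symm hj]
    · simp
  rw [Finset.sum_congr rfl fun i _ => h1 i]
  rw [Fintype.sum_equiv e (fun i => G ((x, a), e i) * (if e i = (y, b) then 1 else 0))
    (fun w => G ((x, a), w) * (if w = (y, b) then 1 else 0)) (fun i => rfl)]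
  simp [Finset.sum_ite_eq']

end Rest


/-- `γ₂*` is submultiplicative under parallel composition of games, with
respect to the partition `(X₁×A₁×X₂×A₂) : (Y₁×B₁×Y₂×B₂)`. -/
theorem stmt14 {X₁ A₁ Y₁ B₁ X₂ A₂ Y₂ B₂ : Type*}
    [Fintype X₁] [Fintype A₁] [Fintype Y₁] [Fintype B₁]
    [Fintype X₂] [Fintype A₂] [Fintype Y₂] [Fintype B₂]
    [Nonempty A₁] [Nonempty B₁] [Nonempty A₂] [Nonempty B₂]
    (G₁ : (X₁ × A₁) × (Y₁ × B₁) → ℝ) (G₂ : (X₂ × A₂) × (Y₂ × B₂) → ℝ) :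
    gamma2star (fun z : ((X₁ × X₂) × (A₁ × A₂)) × ((Y₁ × Y₂) × (B₁ × B₂)) =>
        G₁ ((z.1.1.1, z.1.2.1), (z.2.1.1, z.2.2.1)) *
        G₂ ((z.1.1.2, z.1.2.2), (z.2.1.2, z.2.2.2))) ≤
      gamma2star G₁ * gamma2star G₂ := by
  classical
  set Gp : ((X₁ × X₂) × (A₁ × A₂)) × ((Y₁ × Y₂) × (B₁ × B₂)) → ℝ :=
    fun z => G₁ ((z.1.1.1, z.1.2.1), (z.2.1.1, z.2.2.1)) *
      G₂ ((z.1.1.2, z.1.2.2), (z.2.1.2, z.2.2.2)) with hGp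
  show sInf (gset Gp) ≤ sInf (gset G₁) * sInf (gset G₂)
  refine le_sInf_mul (gset_nonempty G₁) (gset_nonempty G₂)
    (gset_nonneg G₁) (gset_nonneg G₂) ?_
  rintro r₁ ⟨n₁, μ₁, GA₁, GB₁, hdec₁, rfl⟩ r₂ ⟨n₂, μ₂, GA₂, GB₂, hdec₂, rfl⟩
  set e : Fin n₁ × Fin n₂ ≃ Fin (n₁ * n₂) := finProdFinEquiv with hedef
  set M : Matrix (Fin (n₁ * n₂)) (Fin (n₁ * n₂)) ℝ := Matrix.of (fun i j =>
      μ₁ (e.symm i).1 (e.symm j).1 * μ₂ (e.symm i).2 (e.symm j).2) with hM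
  set GAp : Fin n₁ × Fin n₂ → (X₁ × X₂) × (A₁ × A₂) → ℝ :=
    fun p q => GA₁ p.1 (q.1.1, q.2.1) * GA₂ p.2 (q.1.2, q.2.2) with hGAp
  set GBp : Fin n₁ × Fin n₂ → (Y₁ × Y₂) × (B₁ × B₂) → ℝ :=
    fun p q => GB₁ p.1 (q.1.1, q.2.1) * GB₂ p.2 (q.1.2, q.2.2) with hGBp
  set GA : Fin (n₁ * n₂) → (X₁ × X₂) × (A₁ × A₂) → ℝ := fun i => GAp (e.symm i) with hGA
  set GB : Fin (n₁ * n₂) → (Y₁ × Y₂) × (B₁ × B₂) → ℝ := fun j => GBp (e.symm j) with hGB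
  -- the decomposition identity
  have heq : ∀ (x : X₁ × X₂) (a : A₁ × A₂) (y : Y₁ × Y₂) (b : B₁ × B₂),
      Gp ((x, a), (y, b)) =
        ∑ i : Fin (n₁ * n₂), ∑ j : Fin (n₁ * n₂), M i j * GA i (x, a) * GB j (y, b) := by
    intro x a y b
    have expand : ∀ (f : Fin n₁ → Fin n₁ → ℝ) (g : Fin n₂ → Fin n₂ → ℝ),
        ∑ i : Fin (n₁ * n₂), ∑ j : Fin (n₁ * n₂),
          f (e.symm i).1 (e.symm j).1 * g (e.symm i).2 (e.symm j).2
        = (∑ i₁ : Fin n₁, ∑ j₁ : Fin n₁, f i₁ j₁) *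
          (∑ i₂ : Fin n₂, ∑ j₂ : Fin n₂, g i₂ j₂) := by
      intro f g
      have hstep : ∑ p : Fin n₁ × Fin n₂, ∑ q : Fin n₁ × Fin n₂, f p.1 q.1 * g p.2 q.2
          = ∑ i : Fin (n₁ * n₂), ∑ j : Fin (n₁ * n₂),
            f (e.symm i).1 (e.symm j).1 * g (e.symm i).2 (e.symm j).2 := by
        refine Fintype.sum_equiv e _ _ fun p => ?_
        simp only [Equiv.symm_apply_apply]
        exact Fintype.sum_equiv e _ _ fun q => by simp only [Equiv.symm_apply_apply]
      rw [← hstep, Finset.sum_mul_sum]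
      simp only [Fintype.sum_prod_type]
      refine Finset.sum_congr rfl fun i₁ _ => ?_
      refine Finset.sum_congr rfl fun i₂ _ => ?_
      rw [Finset.sum_mul_sum]
    have hterm : ∀ (i j : Fin (n₁ * n₂)),
        M i j * GA i (x, a) * GB j (y, b) =
          (fun i₁ j₁ => μ₁ i₁ j₁ * GA₁ i₁ (x.1, a.1) * GB₁ j₁ (y.1, b.1)) (e.symm i).1 (e.symm j).1 *
          (fun i₂ j₂ => μ₂ i₂ j₂ * GA₂ i₂ (x.2, a.2) * GB₂ j₂ (y.2, b.2)) (e.symm i).2 (e.symm j).2 := by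
      intro i j
      simp only [hM, hGA, hGB, hGAp, hGBp, Matrix.of_apply]
      ring
    calc Gp ((x, a), (y, b))
        = G₁ ((x.1, a.1), (y.1, b.1)) * G₂ ((x.2, a.2), (y.2, b.2)) := rfl
      _ = (∑ i₁ : Fin n₁, ∑ j₁ : Fin n₁, μ₁ i₁ j₁ * GA₁ i₁ (x.1, a.1) * GB₁ j₁ (y.1, b.1)) *
          (∑ i₂ : Fin n₂, ∑ j₂ : Fin n₂, μ₂ i₂ j₂ * GA₂ i₂ (x.2, a.2) * GB₂ j₂ (y.2, b.2)) := by
            rw [hdec₁ x.1 a.1 y.1 b.1, hdec₂ x.2 a.2 y.2 b.2]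
      _ = ∑ i : Fin (n₁ * n₂), ∑ j : Fin (n₁ * n₂),
          (fun i₁ j₁ => μ₁ i₁ j₁ * GA₁ i₁ (x.1, a.1) * GB₁ j₁ (y.1, b.1)) (e.symm i).1 (e.symm j).1 *
          (fun i₂ j₂ => μ₂ i₂ j₂ * GA₂ i₂ (x.2, a.2) * GB₂ j₂ (y.2, b.2)) (e.symm i).2 (e.symm j).2 :=
            (expand _ _).symm
      _ = ∑ i : Fin (n₁ * n₂), ∑ j : Fin (n₁ * n₂), M i j * GA i (x, a) * GB j (y, b) :=
            Finset.sum_congr rfl fun i _ => Finset.sum_congr rfl fun j _ => (hterm i j).symm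
  -- membership of the product decomposition value
  have hmem : opNorm2 M * Real.sqrt (∑ i : Fin (n₁ * n₂), (normOneInf (GA i)) ^ 2) *
      Real.sqrt (∑ j : Fin (n₁ * n₂), (normOneInf (GB j)) ^ 2) ∈ gset Gp :=
    ⟨n₁ * n₂, M, GA, GB, heq, rfl⟩
  refine le_trans (csInf_le ⟨0, fun r hr => gset_nonneg Gp r hr⟩ hmem) ?_
  -- bound the three factors
  have hMle : opNorm2 M ≤ opNorm2 μ₁ * opNorm2 μ₂ := opNorm2_kron_le μ₁ μ₂
  have hAsum : ∑ i : Fin (n₁ * n₂), (normOneInf (GA i)) ^ 2 ≤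
      (∑ i₁ : Fin n₁, (normOneInf (GA₁ i₁)) ^ 2) * (∑ i₂ : Fin n₂, (normOneInf (GA₂ i₂)) ^ 2) := by
    rw [Fintype.sum_equiv e.symm (fun i => (normOneInf (GA i)) ^ 2)
      (fun p => (normOneInf (GAp p)) ^ 2) (fun i => rfl)]
    calc ∑ p : Fin n₁ × Fin n₂, (normOneInf (GAp p)) ^ 2
        ≤ ∑ p : Fin n₁ × Fin n₂, (normOneInf (GA₁ p.1) * normOneInf (GA₂ p.2)) ^ 2 := by
          refine Finset.sum_le_sum fun p _ => ?_
          exact pow_le_pow_left₀ (normOneInf_nonneg _) (normOneInf_tensor_le _ _) 2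
      _ = _ := by
          rw [Finset.sum_mul_sum]
          simp only [Fintype.sum_prod_type, mul_pow]
  have hBsum : ∑ j : Fin (n₁ * n₂), (normOneInf (GB j)) ^ 2 ≤
      (∑ j₁ : Fin n₁, (normOneInf (GB₁ j₁)) ^ 2) * (∑ j₂ : Fin n₂, (normOneInf (GB₂ j₂)) ^ 2) := by
    rw [Fintype.sum_equiv e.symm (fun j => (normOneInf (GB j)) ^ 2)
      (fun p => (normOneInf (GBp p)) ^ 2) (fun j => rfl)]
    calc ∑ p : Fin n₁ × Fin n₂, (normOneInf (GBp p)) ^ 2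
        ≤ ∑ p : Fin n₁ × Fin n₂, (normOneInf (GB₁ p.1) * normOneInf (GB₂ p.2)) ^ 2 := by
          refine Finset.sum_le_sum fun p _ => ?_
          exact pow_le_pow_left₀ (normOneInf_nonneg _) (normOneInf_tensor_le _ _) 2
      _ = _ := by
          rw [Finset.sum_mul_sum]
          simp only [Fintype.sum_prod_type, mul_pow]
  have hA : Real.sqrt (∑ i : Fin (n₁ * n₂), (normOneInf (GA i)) ^ 2) ≤
      Real.sqrt (∑ i₁ : Fin n₁, (normOneInf (GA₁ i₁)) ^ 2) *
      Real.sqrt (∑ i₂ : Fin n₂, (normOneInf (GA₂ i₂)) ^ 2) := by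
    rw [← Real.sqrt_mul (by positivity)]
    exact Real.sqrt_le_sqrt hAsum
  have hB : Real.sqrt (∑ j : Fin (n₁ * n₂), (normOneInf (GB j)) ^ 2) ≤
      Real.sqrt (∑ j₁ : Fin n₁, (normOneInf (GB₁ j₁)) ^ 2) *
      Real.sqrt (∑ j₂ : Fin n₂, (normOneInf (GB₂ j₂)) ^ 2) := by
    rw [← Real.sqrt_mul (by positivity)]
    exact Real.sqrt_le_sqrt hBsum
  have hc₁ : (0:ℝ) ≤ opNorm2 μ₁ := opNorm2_nonneg μ₁
  have hc₂ : (0:ℝ) ≤ opNorm2 μ₂ := opNorm2_nonneg μ₂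
  calc opNorm2 M * Real.sqrt (∑ i : Fin (n₁ * n₂), (normOneInf (GA i)) ^ 2) *
      Real.sqrt (∑ j : Fin (n₁ * n₂), (normOneInf (GB j)) ^ 2)
      ≤ (opNorm2 μ₁ * opNorm2 μ₂) *
        (Real.sqrt (∑ i₁ : Fin n₁, (normOneInf (GA₁ i₁)) ^ 2) *
         Real.sqrt (∑ i₂ : Fin n₂, (normOneInf (GA₂ i₂)) ^ 2)) *
        (Real.sqrt (∑ j₁ : Fin n₁, (normOneInf (GB₁ j₁)) ^ 2) *
         Real.sqrt (∑ j₂ : Fin n₂, (normOneInf (GB₂ j₂)) ^ 2)) := by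
        refine mul_le_mul (mul_le_mul hMle hA (Real.sqrt_nonneg _)
          (mul_nonneg hc₁ hc₂)) hB (Real.sqrt_nonneg _) ?_
        positivity
    _ = (opNorm2 μ₁ * Real.sqrt (∑ i₁ : Fin n₁, (normOneInf (GA₁ i₁)) ^ 2) *
         Real.sqrt (∑ j₁ : Fin n₁, (normOneInf (GB₁ j₁)) ^ 2)) *
        (opNorm2 μ₂ * Real.sqrt (∑ i₂ : Fin n₂, (normOneInf (GA₂ i₂)) ^ 2) *
         Real.sqrt (∑ j₂ : Fin n₂, (normOneInf (GB₂ j₂)) ^ 2)) := by ring
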